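/- Let L : ℝⁿ × ℝⁿ × ℝ → ℝ be C² and suppose L is hyperregular in the sense that there is a C¹ map g : ℝⁿ × ℝⁿ × ℝ → ℝⁿ with (∂L/∂v)(q, g(q, p, z), z) = p for all (q, p, z) and g(q, (∂L/∂v)(q, v, z), z) = v for all (q, v, z). Define the Hamiltonian H(q, p, z) = p·g(q, p, z) − L(q, g(q, p, z), z). If a C² curve (q(t), z(t)) satisfies the Herglotz equations, then the curve (q(t), p(t), z(t)) with p(t) = (∂L/∂v)(q(t), q̇(t), z(t)) satisfies the contact Hamilton equations q̇ = ∂H/∂p, ṗᵢ = −(∂H/∂qⁱ + pᵢ·∂H/∂z), ż = p·(∂H/∂p) − H. (Coordinate version of recovering the Hamiltonian dynamics from the unified/Lagrangian formalism via the Legendre map in the hyperregular case.) -/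

import Mathlib

open scoped BigOperators

noncomputable section

/-- Points of `TQ × ℝ` (coordinates `(q, v, z)`) or of `T*Q × ℝ`
(coordinates `(q, p, z)`). -/
abbrev LPt (n : ℕ) := (Fin n → ℝ) × (Fin n → ℝ) × ℝ

/-- Partial derivative in the `i`-th first-slot (`q`) direction. -/
def pderivQ {n : ℕ} (f : LPt n → ℝ) (x : LPt n) (i : Fin n) : ℝ :=
  fderiv ℝ f x (Pi.single i (1 : ℝ), (0 : Fin n → ℝ), (0 : ℝ))

/-- Partial derivative in the `i`-th middle-slot (`v` resp. `p`) direction. -/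
def pderivMid {n : ℕ} (f : LPt n → ℝ) (x : LPt n) (i : Fin n) : ℝ :=
  fderiv ℝ f x ((0 : Fin n → ℝ), Pi.single i (1 : ℝ), (0 : ℝ))

/-- Partial derivative in the last-slot (`z`) direction. -/
def pderivZ {n : ℕ} (f : LPt n → ℝ) (x : LPt n) : ℝ :=
  fderiv ℝ f x ((0 : Fin n → ℝ), (0 : Fin n → ℝ), (1 : ℝ))

/-- The Herglotz (generalized Euler–Lagrange) equations for a curve `t ↦ (q(t), z(t))`. -/
def Herglotz {n : ℕ} (L : LPt n → ℝ) (q : ℝ → Fin n → ℝ) (z : ℝ → ℝ) : Prop :=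
  ∀ t : ℝ, deriv z t = L (q t, deriv q t, z t) ∧
    ∀ i, deriv (fun s => pderivMid L (q s, deriv q s, z s) i) t -
        pderivQ L (q t, deriv q t, z t) i =
      pderivZ L (q t, deriv q t, z t) * pderivMid L (q t, deriv q t, z t) i

lemma fderiv_mid_sum {n : ℕ} (L : LPt n → ℝ) (x : LPt n) (D : Fin n → ℝ) :
    fderiv ℝ L x ((0 : Fin n → ℝ), D, (0:ℝ)) = ∑ i, D i * pderivMid L x i := by
  have h : ((0 : Fin n → ℝ), D, (0:ℝ))
      = ∑ i, D i • (((0 : Fin n → ℝ), Pi.single i (1:ℝ), (0:ℝ)) : LPt n) := by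
    ext j
    · simp [Prod.fst_sum]
    · simp [Prod.fst_sum, Prod.snd_sum, Finset.sum_apply, Pi.single_apply, mul_comm]
    · simp [Prod.snd_sum]
  rw [h, map_sum]
  simp only [map_smul, pderivMid, smul_eq_mul]

lemma fderivH_apply {n : ℕ} (L : LPt n → ℝ) (hL : ContDiff ℝ 2 L)
    (g : LPt n → Fin n → ℝ) (hg : ContDiff ℝ 1 g)
    (hg₁ : ∀ Q P : Fin n → ℝ, ∀ Z : ℝ,
      (fun i => pderivMid L (Q, g (Q, P, Z), Z) i) = P)
    (H : LPt n → ℝ)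
    (hH : ∀ y : LPt n, H y = (∑ i, y.2.1 i * g y i) - L (y.1, g y, y.2.2))
    (x w : LPt n) :
    fderiv ℝ H x w =
      (∑ i, w.2.1 i * g x i) - fderiv ℝ L (x.1, g x, x.2.2) (w.1, 0, w.2.2) := by
  have hgd : HasFDerivAt g (fderiv ℝ g x) x := ((hg.differentiable one_ne_zero) x).hasFDerivAt
  set G := fderiv ℝ g x with hGdef
  have hgi : ∀ i : Fin n, HasFDerivAt (fun y => g y i)
      ((ContinuousLinearMap.proj i).comp G) x := fun i =>
    ((ContinuousLinearMap.proj (R := ℝ) (φ := fun _ : Fin n => ℝ) i).hasFDerivAt).comp x hgd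
  set Ci : Fin n → (LPt n →L[ℝ] ℝ) := fun i =>
    (ContinuousLinearMap.proj (R := ℝ) (φ := fun _ : Fin n => ℝ) i).comp
      ((ContinuousLinearMap.fst ℝ (Fin n → ℝ) ℝ).comp
        (ContinuousLinearMap.snd ℝ (Fin n → ℝ) ((Fin n → ℝ) × ℝ))) with hCidef
  have hPi : ∀ i : Fin n, HasFDerivAt (fun y : LPt n => y.2.1 i) (Ci i) x :=
    fun i => (Ci i).hasFDerivAt
  have hA : HasFDerivAt (fun y : LPt n => ∑ i, y.2.1 i * g y i)
      (∑ i, (x.2.1 i • ((ContinuousLinearMap.proj i).comp G) + g x i • Ci i)) x :=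
    HasFDerivAt.fun_sum fun i _ => (hPi i).fun_mul (hgi i)
  set J : LPt n →L[ℝ] LPt n :=
    (ContinuousLinearMap.fst ℝ (Fin n → ℝ) ((Fin n → ℝ) × ℝ)).prod
      (G.prod ((ContinuousLinearMap.snd ℝ (Fin n → ℝ) ℝ).comp
        (ContinuousLinearMap.snd ℝ (Fin n → ℝ) ((Fin n → ℝ) × ℝ)))) with hJdef
  have hΦ : HasFDerivAt (fun y : LPt n => ((y.1, g y, y.2.2) : LPt n)) J x := by
    exact hasFDerivAt_fst.prodMk (hgd.prodMk (hasFDerivAt_snd.comp x hasFDerivAt_snd))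
  have hLd : DifferentiableAt ℝ L (x.1, g x, x.2.2) :=
    (hL.differentiable (by norm_num)) _
  have hB : HasFDerivAt (fun y : LPt n => L (y.1, g y, y.2.2))
      ((fderiv ℝ L (x.1, g x, x.2.2)).comp J) x := hLd.hasFDerivAt.comp x hΦ
  have hfun : H = fun y : LPt n => (∑ i, y.2.1 i * g y i) - L (y.1, g y, y.2.2) :=
    funext hH
  rw [hfun, (hA.fun_sub hB).fderiv]
  simp only [ContinuousLinearMap.coe_sub', Pi.sub_apply, ContinuousLinearMap.coe_sum',
    Finset.sum_apply, ContinuousLinearMap.add_apply, ContinuousLinearMap.coe_smul',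
    Pi.smul_apply, ContinuousLinearMap.coe_comp', Function.comp_apply,
    ContinuousLinearMap.proj_apply, ContinuousLinearMap.coe_fst',
    ContinuousLinearMap.coe_snd', ContinuousLinearMap.prod_apply, smul_eq_mul, hJdef, hCidef]
  have hsplit : ((w.1, G w, w.2.2) : LPt n)
      = ((w.1, 0, w.2.2) : LPt n) + (((0 : Fin n → ℝ), G w, (0:ℝ)) : LPt n) := by
    ext <;> simp
  have hP : ∀ i, pderivMid L (x.1, g x, x.2.2) i = x.2.1 i := fun i =>
    congrFun (hg₁ x.1 x.2.1 x.2.2) i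
  rw [hsplit, map_add, fderiv_mid_sum]
  simp only [hP]
  rw [Finset.sum_add_distrib]
  have e1 : ∑ i, x.2.1 i * G w i = ∑ i, G w i * x.2.1 i :=
    Finset.sum_congr rfl fun i _ => mul_comm _ _
  have e2 : ∑ i, g x i * w.2.1 i = ∑ i, w.2.1 i * g x i :=
    Finset.sum_congr rfl fun i _ => mul_comm _ _
  rw [e1, e2]
  ring

lemma pderivMid_H {n : ℕ} (L : LPt n → ℝ) (hL : ContDiff ℝ 2 L)
    (g : LPt n → Fin n → ℝ) (hg : ContDiff ℝ 1 g)
    (hg₁ : ∀ Q P : Fin n → ℝ, ∀ Z : ℝ,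
      (fun i => pderivMid L (Q, g (Q, P, Z), Z) i) = P)
    (H : LPt n → ℝ)
    (hH : ∀ y : LPt n, H y = (∑ i, y.2.1 i * g y i) - L (y.1, g y, y.2.2))
    (x : LPt n) (i : Fin n) : pderivMid H x i = g x i := by
  have h := fderivH_apply L hL g hg hg₁ H hH x ((0 : Fin n → ℝ), Pi.single i (1:ℝ), (0:ℝ))
  rw [pderivMid, h]
  have h0 : (((0 : Fin n → ℝ), (0 : Fin n → ℝ), (0:ℝ)) : LPt n) = 0 := rfl
  simp [h0, Pi.single_apply, Finset.sum_ite_eq']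

lemma pderivQ_H {n : ℕ} (L : LPt n → ℝ) (hL : ContDiff ℝ 2 L)
    (g : LPt n → Fin n → ℝ) (hg : ContDiff ℝ 1 g)
    (hg₁ : ∀ Q P : Fin n → ℝ, ∀ Z : ℝ,
      (fun i => pderivMid L (Q, g (Q, P, Z), Z) i) = P)
    (H : LPt n → ℝ)
    (hH : ∀ y : LPt n, H y = (∑ i, y.2.1 i * g y i) - L (y.1, g y, y.2.2))
    (x : LPt n) (i : Fin n) : pderivQ H x i = - pderivQ L (x.1, g x, x.2.2) i := by
  have h := fderivH_apply L hL g hg hg₁ H hH x (Pi.single i (1:ℝ), (0 : Fin n → ℝ), (0:ℝ))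
  rw [pderivQ, h, pderivQ]
  simp

lemma pderivZ_H {n : ℕ} (L : LPt n → ℝ) (hL : ContDiff ℝ 2 L)
    (g : LPt n → Fin n → ℝ) (hg : ContDiff ℝ 1 g)
    (hg₁ : ∀ Q P : Fin n → ℝ, ∀ Z : ℝ,
      (fun i => pderivMid L (Q, g (Q, P, Z), Z) i) = P)
    (H : LPt n → ℝ)
    (hH : ∀ y : LPt n, H y = (∑ i, y.2.1 i * g y i) - L (y.1, g y, y.2.2))
    (x : LPt n) : pderivZ H x = - pderivZ L (x.1, g x, x.2.2) := by
  have h := fderivH_apply L hL g hg hg₁ H hH x ((0 : Fin n → ℝ), (0 : Fin n → ℝ), (1:ℝ))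
  rw [pderivZ, h, pderivZ]
  simp

/-- Coordinate version of recovering the Hamiltonian dynamics from the
unified/Lagrangian formalism via the Legendre map in the hyperregular case: if `L` is
hyperregular with fibrewise inverse `g` of the Legendre map and
`H(q,p,z) = p·g(q,p,z) − L(q,g(q,p,z),z)`, then every Herglotz solution `(q, z)`,
transported by the Legendre map to `p = ∂L/∂v(q, q̇, z)`, satisfies the contact
Hamilton equations. -/
theorem herglotz_to_contact_hamilton (n : ℕ) (L : LPt n → ℝ)
    (hL : ContDiff ℝ 2 L)
    (g : LPt n → Fin n → ℝ) (hg : ContDiff ℝ 1 g)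
    (hg₁ : ∀ Q P : Fin n → ℝ, ∀ Z : ℝ,
      (fun i => pderivMid L (Q, g (Q, P, Z), Z) i) = P)
    (hg₂ : ∀ Q V : Fin n → ℝ, ∀ Z : ℝ,
      g (Q, (fun i => pderivMid L (Q, V, Z) i), Z) = V)
    (H : LPt n → ℝ)
    (hH : ∀ y : LPt n, H y = (∑ i, y.2.1 i * g y i) - L (y.1, g y, y.2.2))
    (q : ℝ → Fin n → ℝ) (z : ℝ → ℝ)
    (hcurve : ContDiff ℝ 2 (fun t => (q t, z t)))
    (hherglotz : Herglotz L q z)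
    (p : ℝ → Fin n → ℝ)
    (hp : ∀ t : ℝ, p t = fun i => pderivMid L (q t, deriv q t, z t) i) :
    ∀ t : ℝ,
      (∀ i, deriv q t i = pderivMid H (q t, p t, z t) i) ∧
      (∀ i, deriv p t i =
        -(pderivQ H (q t, p t, z t) i + p t i * pderivZ H (q t, p t, z t))) ∧
      deriv z t =
        (∑ i, p t i * pderivMid H (q t, p t, z t) i) - H (q t, p t, z t) := by

  -- smoothness of the components of the curve
  have hq : ContDiff ℝ 2 q := contDiff_fst.comp hcurve
  have hz : ContDiff ℝ 2 z := contDiff_snd.comp hcurve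
  have h2 : (2 : WithTop ℕ∞) = 1 + 1 := by norm_num
  rw [h2] at hq
  have hdq : ContDiff ℝ 1 (deriv q) := (contDiff_succ_iff_deriv.mp hq).2.2
  have hq1 : ContDiff ℝ 1 q := hq.of_le (by norm_num)
  have hz1 : ContDiff ℝ 1 z := hz.of_le (by norm_num)
  have hc : ContDiff ℝ 1 (fun s : ℝ => ((q s, deriv q s, z s) : LPt n)) :=
    hq1.prodMk (hdq.prodMk hz1)
  have hFL : ContDiff ℝ 1 (fderiv ℝ L) := hL.fderiv_right (by norm_num)
  have hpd : ∀ i : Fin n,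
      Differentiable ℝ (fun s : ℝ => pderivMid L (q s, deriv q s, z s) i) := by
    intro i
    have h1 : ContDiff ℝ 1 (fun x : LPt n => fderiv ℝ L x
        ((0 : Fin n → ℝ), Pi.single i (1:ℝ), (0:ℝ))) :=
      (ContinuousLinearMap.apply ℝ ℝ
        (((0 : Fin n → ℝ), Pi.single i (1:ℝ), (0:ℝ)) : LPt n)).contDiff.comp hFL
    exact ((h1.comp hc).differentiable one_ne_zero)
  intro t
  have hgP : g (q t, p t, z t) = deriv q t := by
    rw [hp t]; exact hg₂ (q t) (deriv q t) (z t)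
  have hmid : ∀ i, pderivMid H (q t, p t, z t) i = deriv q t i := by
    intro i
    rw [pderivMid_H L hL g hg hg₁ H hH, hgP]
  refine ⟨fun i => (hmid i).symm, ?_, ?_⟩
  · intro i
    -- derivative of p
    have hp_eq : p = fun s => fun i => pderivMid L (q s, deriv q s, z s) i := funext hp
    have hderiv : deriv p t i = deriv (fun s => pderivMid L (q s, deriv q s, z s) i) t := by
      rw [hp_eq, deriv_pi (fun j => (hpd j t))]
    have hher := (hherglotz t).2 i
    have hQ : pderivQ H (q t, p t, z t) i = - pderivQ L (q t, deriv q t, z t) i := by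
      rw [pderivQ_H L hL g hg hg₁ H hH]
      simp only [hgP]
    have hZ : pderivZ H (q t, p t, z t) = - pderivZ L (q t, deriv q t, z t) := by
      rw [pderivZ_H L hL g hg hg₁ H hH]
      simp only [hgP]
    have hpt : p t i = pderivMid L (q t, deriv q t, z t) i := by rw [hp t]
    rw [hderiv, hQ, hZ, hpt]
    linarith [hher, mul_comm (pderivZ L (q t, deriv q t, z t))
      (pderivMid L (q t, deriv q t, z t) i)]
  · have hz' := (hherglotz t).1
    have hHval : H (q t, p t, z t) =
        (∑ i, p t i * deriv q t i) - L (q t, deriv q t, z t) := by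
      rw [hH (q t, p t, z t)]
      simp only [hgP]
    rw [hz', hHval]
    have : ∑ i, p t i * pderivMid H (q t, p t, z t) i = ∑ i, p t i * deriv q t i :=
      Finset.sum_congr rfl fun i _ => by rw [hmid i]
    rw [this]
    ring

end
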